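/- Let λ > 0, μ > λ, ρ = λ/μ, and let σ² > 1/λ². Let ℓ ∈ (0,1) be the unique root of z = e^{-(μ/λ)(1-z)}. Then ℓ ≤ ρ ≤ 1 + (1/(1 + λ²σ²))(ℓ - 1). -/

import Mathlib

lemma sinh_le_mul_cosh {v : ℝ} (hv : 0 ≤ v) : Real.sinh v ≤ v * Real.cosh v := by
  have mono : MonotoneOn (fun x : ℝ => x * Real.cosh x - Real.sinh x) (Set.Ici 0) := by
    apply monotoneOn_of_deriv_nonneg (convex_Ici 0)
    · fun_prop
    · intro x hx
      apply DifferentiableAt.differentiableWithinAt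
      fun_prop
    · intro x hx
      rw [interior_Ici] at hx
      have H : HasDerivAt (fun x : ℝ => x * Real.cosh x - Real.sinh x)
          ((1 * Real.cosh x + x * Real.sinh x) - Real.cosh x) x :=
        ((hasDerivAt_id x).mul (Real.hasDerivAt_cosh x)).sub (Real.hasDerivAt_sinh x)
      rw [H.deriv]
      have hs : 0 < Real.sinh x := Real.sinh_pos_iff.mpr hx
      nlinarith [le_of_lt (Set.mem_Ioi.mp hx)]
  have h := mono (Set.self_mem_Ici) (Set.mem_Ici.mpr hv) hv
  simp only [Real.cosh_zero, Real.sinh_zero, zero_mul, sub_zero] at h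
  linarith

theorem rho_between_rolski_bounds
    (lam m s2 l : ℝ) (hlam : 0 < lam) (hm : lam < m)
    (hs2 : 1 / lam ^ 2 < s2)
    (hl : l ∈ Set.Ioo (0 : ℝ) 1)
    (hlroot : l = Real.exp (-(m / lam) * (1 - l))) :
    l ≤ lam / m ∧ lam / m ≤ 1 + (1 / (1 + lam ^ 2 * s2)) * (l - 1) := by
  obtain ⟨hl0, hl1⟩ := hl
  have hm0 : 0 < m := hlam.trans hm
  have hml : 0 < m / lam := div_pos hm0 hlam
  have h1l : 0 < 1 - l := by linarith
  -- log of root equation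
  have hlog : Real.log l = -(m / lam) * (1 - l) := by
    conv_lhs => rw [hlroot]
    rw [Real.log_exp]
  constructor
  · -- lower bound: log l ≥ 1 - 1/l
    have h2 : Real.log l⁻¹ ≤ l⁻¹ - 1 := Real.log_le_sub_one_of_pos (inv_pos.mpr hl0)
    rw [Real.log_inv] at h2
    have h4 : m / lam * (1 - l) ≤ l⁻¹ - 1 := by
      rw [hlog] at h2; linarith
    have h4' : m * (1 - l) * l ≤ lam * (1 - l) := by
      have hmul := mul_le_mul_of_nonneg_right h4
        (mul_nonneg hlam.le hl0.le)
      have e1 : m / lam * (1 - l) * (lam * l) = m * (1 - l) * l := by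
        field_simp
      have e2 : (l⁻¹ - 1) * (lam * l) = lam * (1 - l) := by
        field_simp
      rw [e1, e2] at hmul; exact hmul
    rw [le_div_iff₀ hm0]
    nlinarith [h4', h1l]
  · -- upper bound
    set v : ℝ := m / lam * (1 - l) / 2 with hv
    have hv0 : 0 < v := by positivity
    have hle : l = Real.exp (-v) ^ 2 := by
      rw [← Real.exp_nat_mul]
      conv_lhs => rw [hlroot]
      congr 1; push_cast; rw [hv]; ring
    have key := sinh_le_mul_cosh hv0.le
    rw [Real.sinh_eq, Real.cosh_eq] at key
    set a := Real.exp (-v) with ha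
    set A := Real.exp v with hA
    have haA : a * A = 1 := by rw [ha, hA, ← Real.exp_add]; simp
    have ha0 : 0 < a := Real.exp_pos _
    -- A - a ≤ v (A + a); multiply by a: 1 - a² ≤ v(1 + a²)
    have h6 : 1 - a ^ 2 ≤ v * (1 + a ^ 2) := by nlinarith
    rw [← hle] at h6
    -- hence 2 ≤ (m/lam)(1+l), i.e. lam/m ≤ (1+l)/2
    have h8 : 2 * lam ≤ m * (1 + l) := by
      have h7' : lam * (1 - l) * 2 ≤ m * (1 - l) * (1 + l) := by
        have hmul := mul_le_mul_of_nonneg_right h6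
          (by positivity : (0:ℝ) ≤ lam * 2)
        calc lam * (1 - l) * 2 = (1 - l) * (lam * 2) := by ring
          _ ≤ v * (1 + l) * (lam * 2) := hmul
          _ = m * (1 - l) * (1 + l) := by rw [hv]; field_simp
      nlinarith [h7', h1l]
    have h10 : lam / m ≤ (1 + l) / 2 := by
      rw [div_le_div_iff₀ hm0 (by norm_num : (0:ℝ) < 2)]
      linarith
    have hc : 1 / (1 + lam ^ 2 * s2) < 1 / 2 := by
      have h12 : 1 < lam ^ 2 * s2 := by
        have := (div_lt_iff₀ (by positivity : (0:ℝ) < lam ^ 2)).mp hs2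
        nlinarith
      apply one_div_lt_one_div_of_lt (by norm_num)
      linarith
    have hfin : (1 + l) / 2 ≤ 1 + 1 / (1 + lam ^ 2 * s2) * (l - 1) := by
      nlinarith [mul_pos (by linarith : (0:ℝ) < 1/2 - 1/(1 + lam ^ 2 * s2)) h1l]
    linarith
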